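/- arXiv:0906.0186 — 2 statements merged into one kernel-verified Lean document; each statement's English description precedes it below -/
import Mathlib

section
/- Let ν be strictly dominant, N ∈ ℤ, m > 0 an integer, and let T ⊆ U_N satisfy T·U_{m,N} ⊆ T. Then the set {g ∈ U_N : f_ν(g) ∈ T} is stable under right multiplication by U_{m,N}: if g ∈ U_N with f_ν(g) ∈ T and u ∈ U_{m,N}, then f_ν(g·u) ∈ T. Moreover, for g ∈ U_N, the coset f_ν(g)·U_{m,N} meets T if and only if f_ν(g) ∈ T; hence in the quotient U_N/U_{m,N} the preimage of T/U_{m,N} under the map induced by f_ν equals f_ν⁻¹(T)/U_{m,N}. -/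
noncomputable section

open Matrix

/-- The ε-adic valuation on `L = k̄((ε))`, with `val 0 = ∞`. -/
def val {K : Type*} [Field K] (x : LaurentSeries K) : WithTop ℤ := x.orderTop

/-- The uniformizer ε of the Laurent series field. -/
def eps (K : Type*) [Field K] : LaurentSeries K := HahnSeries.single 1 1

/-- `σ : L → L` is the Frobenius automorphism: it fixes ε and raises each Laurent-series
coefficient to the `q`-th power.  (This property determines `σ` uniquely.) -/
def IsFrobenius (K : Type*) [Field K] (q : ℕ)
    (σ : LaurentSeries K → LaurentSeries K) : Prop :=
  ∀ (x : LaurentSeries K) (n : ℤ), (σ x).coeff n = (x.coeff n) ^ q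

/-- Upper unitriangular matrix: an element of `U_1`. -/
def Unitri {K : Type*} [Field K] {n : ℕ}
    (g : Matrix (Fin n) (Fin n) (LaurentSeries K)) : Prop :=
  (∀ i, g i i = 1) ∧ (∀ i j : Fin n, j < i → g i j = 0)

/-- `ν = (ν_1, …, ν_n)` is strictly dominant: `ν_1 > ν_2 > … > ν_n`. -/
def StrictDominant {n : ℕ} (ν : Fin n → ℤ) : Prop :=
  ∀ p q : Fin n, p < q → ν q < ν p

/-- The diagonal matrix `ε^ν = diag(ε^{ν_1}, …, ε^{ν_n})`. -/
def epsDiag (K : Type*) [Field K] {n : ℕ} (ν : Fin n → ℤ) :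
    Matrix (Fin n) (Fin n) (LaurentSeries K) :=
  Matrix.diagonal fun i => eps K ^ (ν i)

/-- The map `f_ν : U_1 → U_1`, `f_ν(h) = h⁻¹ · ε^ν · σ(h) · ε^{−ν}`. -/
def fnu {K : Type*} [Field K] {n : ℕ} (σ : LaurentSeries K → LaurentSeries K)
    (ν : Fin n → ℤ) (g : Matrix (Fin n) (Fin n) (LaurentSeries K)) :
    Matrix (Fin n) (Fin n) (LaurentSeries K) :=
  g⁻¹ * epsDiag K ν * g.map σ * epsDiag K (fun i => -ν i)

/-- The subgroup `U(o_L)` of `U_1`: unitriangular matrices with entries in `o_L`. -/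
def UO (K : Type*) [Field K] (n : ℕ) :
    Set (Matrix (Fin n) (Fin n) (LaurentSeries K)) :=
  {g | Unitri g ∧ ∀ p q : Fin n, 0 ≤ val (g p q)}

/-- `U_N = {g ∈ U_1 : val(g_{pq}) ≥ (q−p)·N for all p < q}`
(equivalently `ε^{−μ}·U(o_L)·ε^{μ}` for `μ = (N, 2N, …, nN)`). -/
def UN (K : Type*) [Field K] (n : ℕ) (N : ℤ) :
    Set (Matrix (Fin n) (Fin n) (LaurentSeries K)) :=
  {g | Unitri g ∧ ∀ p q : Fin n, p < q →
    ((((q : ℤ) - (p : ℤ)) * N : ℤ) : WithTop ℤ) ≤ val (g p q)}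

/-- `U_{m,N} = {g ∈ U_1 : val(g_{pq}) ≥ (q−p)·N + m for all p < q}`. -/
def UmN (K : Type*) [Field K] (n : ℕ) (m N : ℤ) :
    Set (Matrix (Fin n) (Fin n) (LaurentSeries K)) :=
  {g | Unitri g ∧ ∀ p q : Fin n, p < q →
    ((((q : ℤ) - (p : ℤ)) * N + m : ℤ) : WithTop ℤ) ≤ val (g p q)}

/-! ### Auxiliary lemmas -/

namespace Aux

variable {K : Type*} [Field K]

lemma val_zero : val (0 : LaurentSeries K) = ⊤ := HahnSeries.orderTop_zero
lemma val_one : val (1 : LaurentSeries K) = 0 := HahnSeries.orderTop_one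
lemma val_mul_ge (x y : LaurentSeries K) : val x + val y ≤ val (x * y) :=
  HahnSeries.orderTop_add_le_mul
lemma val_add_ge (x y : LaurentSeries K) : min (val x) (val y) ≤ val (x + y) :=
  HahnSeries.min_orderTop_le_orderTop_add
lemma val_neg (x : LaurentSeries K) : val (-x) = val x := HahnSeries.orderTop_neg

lemma val_sum_ge {ι : Type*} (s : Finset ι) (f : ι → LaurentSeries K) (c : WithTop ℤ)
    (h : ∀ i ∈ s, c ≤ val (f i)) : c ≤ val (∑ i ∈ s, f i) := by
  classical
  revert h
  induction s using Finset.cons_induction with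
  | empty => intro _; simp [val_zero]
  | cons a s' hx ih =>
    intro h
    rw [Finset.sum_cons]
    refine le_trans ?_ (val_add_ge _ _)
    exact le_min (h a (Finset.mem_cons_self a s'))
      (ih fun i hi => h i (Finset.mem_cons_of_mem hi))

lemma eps_zpow (k : ℤ) : eps K ^ k = HahnSeries.single k 1 := (RatFunc.single_zpow k).symm

lemma val_eps_zpow (k : ℤ) : val (eps K ^ k) = (k : WithTop ℤ) := by
  rw [eps_zpow]; exact HahnSeries.orderTop_single one_ne_zero

lemma eps_ne_zero : eps K ≠ 0 := HahnSeries.single_ne_zero one_ne_zero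

lemma eps_zpow_mul_neg (a : ℤ) : eps K ^ a * eps K ^ (-a) = 1 := by
  rw [_root_.zpow_neg, mul_inv_cancel₀ (zpow_ne_zero _ eps_ne_zero)]

/-- combining valuation bounds across a product -/
lemma coe_add_le {c c₁ c₂ : ℤ} (h : c ≤ c₁ + c₂) {x y : LaurentSeries K}
    (h₁ : (c₁ : WithTop ℤ) ≤ val x) (h₂ : (c₂ : WithTop ℤ) ≤ val y) :
    (c : WithTop ℤ) ≤ val (x * y) :=
  calc (c : WithTop ℤ) ≤ ((c₁ + c₂ : ℤ) : WithTop ℤ) := WithTop.coe_le_coe.2 h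
    _ = (c₁ : WithTop ℤ) + (c₂ : WithTop ℤ) := by push_cast; rfl
    _ ≤ val x + val y := add_le_add h₁ h₂
    _ ≤ val (x * y) := val_mul_ge x y

/-! ### Frobenius lemmas -/

variable {q : ℕ} {σ : LaurentSeries K → LaurentSeries K}

lemma sigma_eq_map (hσ : IsFrobenius K q σ) (f : K →+* K) (hf : ∀ a, f a = a ^ q)
    (x : LaurentSeries K) : σ x = x.map (f : K →ₙ+* K) := by
  ext g
  rw [HahnSeries.map_coeff, hσ]
  exact (hf _).symm

lemma sigma_mul (hσ : IsFrobenius K q σ) (f : K →+* K) (hf : ∀ a, f a = a ^ q)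
    (x y : LaurentSeries K) : σ (x * y) = σ x * σ y := by
  rw [sigma_eq_map hσ f hf, sigma_eq_map hσ f hf, sigma_eq_map hσ f hf, HahnSeries.map_mul]

lemma sigma_zero (hσ : IsFrobenius K q σ) (hq : q ≠ 0) : σ 0 = 0 := by
  ext g; rw [hσ 0 g]; simp [zero_pow hq]

lemma sigma_one (hσ : IsFrobenius K q σ) (hq : q ≠ 0) : σ 1 = 1 := by
  ext g
  rw [hσ]
  rcases eq_or_ne (g : ℤ) 0 with h | h <;>
    simp [HahnSeries.coeff_one, h, zero_pow hq]

lemma sigma_add (hσ : IsFrobenius K q σ) (f : K →+* K) (hf : ∀ a, f a = a ^ q)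
    (x y : LaurentSeries K) : σ (x + y) = σ x + σ y := by
  ext g
  rw [HahnSeries.coeff_add, hσ, hσ, hσ, HahnSeries.coeff_add, ← hf, ← hf, ← hf, map_add]

lemma sigma_sum (hσ : IsFrobenius K q σ) (hq : q ≠ 0) (f : K →+* K) (hf : ∀ a, f a = a ^ q)
    {ι : Type*} (s : Finset ι) (c : ι → LaurentSeries K) :
    σ (∑ i ∈ s, c i) = ∑ i ∈ s, σ (c i) := by
  classical
  induction s using Finset.cons_induction with
  | empty => simpa using sigma_zero hσ hq
  | cons a s' hx ih => rw [Finset.sum_cons, Finset.sum_cons, sigma_add hσ f hf, ih]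

lemma val_sigma_ge (hσ : IsFrobenius K q σ) (hq : q ≠ 0) (x : LaurentSeries K) :
    val x ≤ val (σ x) := by
  cases ho : (σ x).orderTop with
  | top => exact le_of_le_of_eq le_top ho.symm
  | coe g =>
    have h1 : (σ x).coeff g ≠ 0 := HahnSeries.coeff_orderTop_ne ho
    have h2 : x.coeff g ≠ 0 := by
      intro h0; exact h1 (by rw [hσ, h0, zero_pow hq])
    exact le_trans (HahnSeries.orderTop_le_of_coeff_ne_zero h2) (le_of_eq ho.symm)

lemma exists_frobenius_hom (F : Type*) [Field F] [Fintype F] :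
    ∃ f : AlgebraicClosure F →+* AlgebraicClosure F,
      ∀ a, f a = a ^ Fintype.card F := by
  obtain ⟨n, hp, hcard⟩ := FiniteField.card F (ringChar F)
  haveI : CharP (AlgebraicClosure F) (ringChar F) :=
    charP_of_injective_algebraMap (algebraMap F (AlgebraicClosure F)).injective (ringChar F)
  haveI : ExpChar (AlgebraicClosure F) (ringChar F) := ExpChar.prime hp
  refine ⟨iterateFrobenius (AlgebraicClosure F) (ringChar F) n, fun a => ?_⟩
  rw [iterateFrobenius_def, hcard]

lemma sigma_map_matrix_mul (hσ : IsFrobenius K q σ) (hq : q ≠ 0)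
    (f : K →+* K) (hf : ∀ a, f a = a ^ q) {n : ℕ}
    (A B : Matrix (Fin n) (Fin n) (LaurentSeries K)) :
    (A * B).map σ = A.map σ * B.map σ := by
  refine Matrix.ext fun p r => ?_
  rw [Matrix.map_apply, Matrix.mul_apply, Matrix.mul_apply, sigma_sum hσ hq f hf]
  exact Finset.sum_congr rfl fun j _ => by
    rw [sigma_mul hσ f hf, Matrix.map_apply, Matrix.map_apply]

/-! ### Matrix lemmas -/

variable {n : ℕ}

/-- Unitriangular matrices with entrywise valuation bound `b (q-p)` above the diagonal. -/
def BddU (b : ℤ → ℤ) (g : Matrix (Fin n) (Fin n) (LaurentSeries K)) : Prop :=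
  Unitri g ∧ ∀ p q : Fin n, p < q →
    ((b ((q : ℤ) - (p : ℤ)) : ℤ) : WithTop ℤ) ≤ val (g p q)

lemma mem_UN {g : Matrix (Fin n) (Fin n) (LaurentSeries K)} {N : ℤ} :
    g ∈ UN K n N ↔ BddU (fun d => d * N) g := Iff.rfl

lemma mem_UmN {g : Matrix (Fin n) (Fin n) (LaurentSeries K)} {m N : ℤ} :
    g ∈ UmN K n m N ↔ BddU (fun d => d * N + m) g := Iff.rfl

lemma unitri_mul {A B : Matrix (Fin n) (Fin n) (LaurentSeries K)}
    (hA : Unitri A) (hB : Unitri B) : Unitri (A * B) := by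
  constructor
  · intro i
    rw [Matrix.mul_apply, Finset.sum_eq_single i]
    · rw [hA.1 i, hB.1 i, one_mul]
    · intro r _ hr
      rcases lt_or_gt_of_ne hr with h | h
      · rw [hA.2 i r h, zero_mul]
      · rw [hB.2 r i h, mul_zero]
    · intro h; exact absurd (Finset.mem_univ i) h
  · intro i j hji
    rw [Matrix.mul_apply]
    refine Finset.sum_eq_zero fun r _ => ?_
    rcases lt_or_ge r i with h | h
    · rw [hA.2 i r h, zero_mul]
    · rw [hB.2 r j (lt_of_lt_of_le hji h), mul_zero]

lemma bddU_mul {b : ℤ → ℤ}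
    (hb : ∀ d₁ d₂ : ℤ, 1 ≤ d₁ → 1 ≤ d₂ → b (d₁ + d₂) ≤ b d₁ + b d₂)
    {A B : Matrix (Fin n) (Fin n) (LaurentSeries K)}
    (hA : BddU b A) (hB : BddU b B) : BddU b (A * B) := by
  refine ⟨unitri_mul hA.1 hB.1, fun p q hpq => ?_⟩
  rw [Matrix.mul_apply]
  refine val_sum_ge _ _ _ fun r _ => ?_
  rcases lt_trichotomy r p with h | h | h
  · rw [hA.1.2 p r h, zero_mul]; simp [val_zero]
  · rw [h, hA.1.1 p, one_mul]
    exact hB.2 p q hpq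
  · rcases lt_trichotomy q r with h' | h' | h'
    · rw [hB.1.2 r q h', mul_zero]; simp [val_zero]
    · rw [← h', hB.1.1 q, mul_one]
      exact hA.2 p q hpq
    · have h1 := Fin.lt_def.mp h
      have h2 := Fin.lt_def.mp h'
      have key : b ((q : ℤ) - (p : ℤ)) ≤ b ((r : ℤ) - (p : ℤ)) + b ((q : ℤ) - (r : ℤ)) := by
        have hk := hb ((r : ℤ) - (p : ℤ)) ((q : ℤ) - (r : ℤ)) (by omega) (by omega)
        have harg : (r : ℤ) - (p : ℤ) + ((q : ℤ) - (r : ℤ)) = (q : ℤ) - (p : ℤ) := by ring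
        rwa [harg] at hk
      exact coe_add_le key (hA.2 p r h) (hB.2 r q h')

lemma pow_bound {b : ℤ → ℤ}
    (hb : ∀ d₁ d₂ : ℤ, 1 ≤ d₁ → 1 ≤ d₂ → b (d₁ + d₂) ≤ b d₁ + b d₂)
    {W : Matrix (Fin n) (Fin n) (LaurentSeries K)}
    (hW0 : ∀ p q : Fin n, ¬ p < q → W p q = 0)
    (hWb : ∀ p q : Fin n, p < q → ((b ((q : ℤ) - (p : ℤ)) : ℤ) : WithTop ℤ) ≤ val (W p q)) :
    ∀ (k : ℕ) (p q : Fin n), ((W ^ k) p q ≠ 0 → (p : ℕ) + k ≤ (q : ℕ)) ∧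
      (p < q → ((b ((q : ℤ) - (p : ℤ)) : ℤ) : WithTop ℤ) ≤ val ((W ^ k) p q)) := by
  intro k
  induction k with
  | zero =>
    intro p q
    constructor
    · intro h
      by_contra hc
      have hne : p ≠ q := by
        intro e; subst e; omega
      rw [pow_zero] at h
      exact h (Matrix.one_apply_ne hne)
    · intro hpq
      rw [pow_zero, Matrix.one_apply_ne (ne_of_lt hpq)]
      simp [val_zero]
  | succ k IH =>
    intro p q
    constructor
    · intro h
      rw [pow_succ, Matrix.mul_apply] at h
      obtain ⟨r, _, hr⟩ := Finset.exists_ne_zero_of_sum_ne_zero h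
      rcases mul_ne_zero_iff.mp hr with ⟨h1, h2⟩
      have hk := (IH p r).1 h1
      have hrq : r < q := by
        by_contra hc; exact h2 (hW0 r q hc)
      have := Fin.lt_def.mp hrq
      omega
    · intro hpq
      rw [pow_succ, Matrix.mul_apply]
      refine val_sum_ge _ _ _ fun r _ => ?_
      by_cases hW : W r q = 0
      · rw [hW, mul_zero]; simp [val_zero]
      by_cases hWk : (W ^ k) p r = 0
      · rw [hWk, zero_mul]; simp [val_zero]
      have hrq : r < q := by
        by_contra hc; exact hW (hW0 r q hc)
      have hpr : (p : ℕ) + k ≤ (r : ℕ) := (IH p r).1 hWk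
      rcases eq_or_lt_of_le (show p ≤ r from Fin.le_def.mpr (by omega)) with heq | hlt
      · have hk0 : k = 0 := by
          have : (p : ℕ) = (r : ℕ) := congrArg Fin.val heq
          omega
        subst hk0
        cases heq
        rw [pow_zero, Matrix.one_apply_eq, one_mul]
        exact hWb p q hpq
      · have h1 := Fin.lt_def.mp hlt
        have h2 := Fin.lt_def.mp hrq
        have key : b ((q : ℤ) - (p : ℤ)) ≤ b ((r : ℤ) - (p : ℤ)) + b ((q : ℤ) - (r : ℤ)) := by
          have hk := hb ((r : ℤ) - (p : ℤ)) ((q : ℤ) - (r : ℤ)) (by omega) (by omega)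
          have harg : (r : ℤ) - (p : ℤ) + ((q : ℤ) - (r : ℤ)) = (q : ℤ) - (p : ℤ) := by ring
          rwa [harg] at hk
        exact coe_add_le key ((IH p r).2 hlt) (hWb r q hrq)

lemma bddU_inv {b : ℤ → ℤ}
    (hb : ∀ d₁ d₂ : ℤ, 1 ≤ d₁ → 1 ≤ d₂ → b (d₁ + d₂) ≤ b d₁ + b d₂)
    {g : Matrix (Fin n) (Fin n) (LaurentSeries K)} (hg : BddU b g) :
    BddU b g⁻¹ ∧ g * g⁻¹ = 1 ∧ g⁻¹ * g = 1 := by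
  set x : Matrix (Fin n) (Fin n) (LaurentSeries K) := 1 - g with hxdef
  have hgx : g = 1 - x := (sub_sub_cancel 1 g).symm
  have hx0 : ∀ p q : Fin n, ¬ p < q → x p q = 0 := by
    intro p q h
    rcases eq_or_lt_of_le (le_of_not_gt h) with heq | hlt
    · cases heq
      rw [hxdef, Matrix.sub_apply, Matrix.one_apply_eq, hg.1.1, sub_self]
    · rw [hxdef, Matrix.sub_apply, Matrix.one_apply_ne (ne_of_lt hlt).symm,
        hg.1.2 p q hlt, sub_zero]
  have hxb : ∀ p q : Fin n, p < q →
      ((b ((q : ℤ) - (p : ℤ)) : ℤ) : WithTop ℤ) ≤ val (x p q) := by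
    intro p q h
    have hx : x p q = -(g p q) := by
      rw [hxdef, Matrix.sub_apply, Matrix.one_apply_ne (ne_of_lt h), zero_sub]
    rw [hx, val_neg]
    exact hg.2 p q h
  have PB := pow_bound hb hx0 hxb
  set S : Matrix (Fin n) (Fin n) (LaurentSeries K) := ∑ k ∈ Finset.range n, x ^ k with hSdef
  have hxn : x ^ n = 0 := by
    refine Matrix.ext fun p q => ?_
    rw [Matrix.zero_apply]
    by_contra h
    have h1 := (PB n p q).1 h
    have := q.isLt
    omega
  have hSg : S * g = 1 := by
    have h1 : S * (x - 1) = x ^ n - 1 := geom_sum_mul x n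
    rw [hxn, zero_sub] at h1
    have h2 : S * g = S - S * x := by rw [hgx, Matrix.mul_sub, Matrix.mul_one]
    have h3 : S * (x - 1) = S * x - S := by rw [Matrix.mul_sub, Matrix.mul_one]
    rw [h3] at h1
    rw [h2, show S - S * x = -(S * x - S) from (neg_sub _ _).symm, h1, neg_neg]
  have hgS : g * S = 1 := by
    have h1 : (x - 1) * S = x ^ n - 1 := mul_geom_sum x n
    rw [hxn, zero_sub] at h1
    have h2 : g * S = S - x * S := by rw [hgx, Matrix.sub_mul, Matrix.one_mul]
    have h3 : (x - 1) * S = x * S - S := by rw [Matrix.sub_mul, Matrix.one_mul]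
    rw [h3] at h1
    rw [h2, show S - x * S = -(x * S - S) from (neg_sub _ _).symm, h1, neg_neg]
  have hinv : g⁻¹ = S := Matrix.inv_eq_left_inv hSg
  refine ⟨⟨⟨?_, ?_⟩, ?_⟩, by rw [hinv]; exact hgS, by rw [hinv]; exact hSg⟩
  · intro p
    rw [hinv, hSdef, Matrix.sum_apply, Finset.sum_eq_single 0]
    · rw [pow_zero, Matrix.one_apply_eq]
    · intro k _ hk
      by_contra hne
      have := (PB k p p).1 hne
      omega
    · intro h0
      exact absurd (Finset.mem_range.mpr p.pos) h0
  · intro i j hji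
    rw [hinv, hSdef, Matrix.sum_apply]
    refine Finset.sum_eq_zero fun k _ => ?_
    by_contra hne
    have h1 := (PB k i j).1 hne
    have := Fin.lt_def.mp hji
    omega
  · intro p q hpq
    rw [hinv, hSdef, Matrix.sum_apply]
    exact val_sum_ge _ _ _ fun k _ => (PB k p q).2 hpq

lemma UN_entry {N : ℤ} {A : Matrix (Fin n) (Fin n) (LaurentSeries K)}
    (hA : BddU (fun d => d * N) A) {p r : Fin n} (h : p ≤ r) :
    ((((r : ℤ) - (p : ℤ)) * N : ℤ) : WithTop ℤ) ≤ val (A p r) := by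
  rcases eq_or_lt_of_le h with heq | hlt
  · cases heq
    rw [hA.1.1]
    simp [val_one]
  · exact hA.2 p r hlt

lemma triple_entries {N m : ℤ} {A B W : Matrix (Fin n) (Fin n) (LaurentSeries K)}
    (hA : BddU (fun d => d * N) A) (hB : BddU (fun d => d * N) B)
    (hW0 : ∀ p q : Fin n, ¬ p < q → W p q = 0)
    (hWb : ∀ p q : Fin n, p < q →
      ((((q : ℤ) - (p : ℤ)) * N + m : ℤ) : WithTop ℤ) ≤ val (W p q)) :
    BddU (fun d => d * N + m) (1 + A * W * B) := by
  have hC0 : ∀ p q : Fin n, ¬ p < q → (A * W * B) p q = 0 := by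
    intro p q h
    rw [Matrix.mul_apply]
    refine Finset.sum_eq_zero fun s _ => ?_
    rw [Matrix.mul_apply, Finset.sum_mul]
    refine Finset.sum_eq_zero fun r _ => ?_
    by_cases hr : r < p
    · rw [hA.1.2 p r hr, zero_mul, zero_mul]
    · by_cases hs : q < s
      · rw [hB.1.2 s q hs, mul_zero]
      · have hrs : ¬ r < s := by
          have h1 := Fin.le_def.mp (le_of_not_gt hr)
          have h2 := Fin.le_def.mp (le_of_not_gt hs)
          have h3 := Fin.le_def.mp (le_of_not_gt h)
          intro hc
          have := Fin.lt_def.mp hc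
          omega
        rw [hW0 r s hrs, mul_zero, zero_mul]
  have hCb : ∀ p q : Fin n, p < q →
      ((((q : ℤ) - (p : ℤ)) * N + m : ℤ) : WithTop ℤ) ≤ val ((A * W * B) p q) := by
    intro p q hpq
    rw [Matrix.mul_apply]
    refine val_sum_ge _ _ _ fun s _ => ?_
    rw [Matrix.mul_apply, Finset.sum_mul]
    refine val_sum_ge _ _ _ fun r _ => ?_
    by_cases hr : r < p
    · rw [hA.1.2 p r hr, zero_mul, zero_mul]; simp [val_zero]
    by_cases hs : q < s
    · rw [hB.1.2 s q hs, mul_zero]; simp [val_zero]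
    by_cases hrs : r < s
    case neg => rw [hW0 r s hrs, mul_zero, zero_mul]; simp [val_zero]
    have hpr : p ≤ r := le_of_not_gt hr
    have hsq : s ≤ q := le_of_not_gt hs
    refine coe_add_le (c₁ := ((s : ℤ) - (p : ℤ)) * N + m) (c₂ := ((q : ℤ) - (s : ℤ)) * N)
      (le_of_eq (by ring)) ?_ (UN_entry hB hsq)
    exact coe_add_le (le_of_eq (by ring)) (UN_entry hA hpr) (hWb r s hrs)
  refine ⟨⟨fun p => ?_, fun i j hji => ?_⟩, fun p q hpq => ?_⟩
  · rw [Matrix.add_apply, Matrix.one_apply_eq, hC0 p p (lt_irrefl p), add_zero]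
  · rw [Matrix.add_apply, Matrix.one_apply_ne (ne_of_lt hji).symm,
      hC0 i j (lt_asymm hji), add_zero]
  · rw [Matrix.add_apply, Matrix.one_apply_ne (ne_of_lt hpq), zero_add]
    exact hCb p q hpq

lemma one_mem_bddU {b : ℤ → ℤ} : BddU b (1 : Matrix (Fin n) (Fin n) (LaurentSeries K)) := by
  refine ⟨⟨fun i => Matrix.one_apply_eq i, fun i j hji =>
    Matrix.one_apply_ne (ne_of_lt hji).symm⟩, fun p q hpq => ?_⟩
  rw [Matrix.one_apply_ne (ne_of_lt hpq)]
  simp [val_zero]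

lemma epsDiag_mul_neg {n : ℕ} (ν : Fin n → ℤ) :
    epsDiag K ν * epsDiag K (fun i => -ν i) = 1 := by
  rw [epsDiag, epsDiag, Matrix.diagonal_mul_diagonal]
  have h : (fun i : Fin n => eps K ^ ν i * eps K ^ (-ν i)) = fun _ => (1 : LaurentSeries K) :=
    funext fun i => eps_zpow_mul_neg (ν i)
  rw [h, Matrix.diagonal_one]

lemma epsDiag_neg_mul {n : ℕ} (ν : Fin n → ℤ) :
    epsDiag K (fun i => -ν i) * epsDiag K ν = 1 := by
  rw [epsDiag, epsDiag, Matrix.diagonal_mul_diagonal]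
  have h : (fun i : Fin n => eps K ^ (-ν i) * eps K ^ ν i) = fun _ => (1 : LaurentSeries K) :=
    funext fun i => by rw [mul_comm]; exact eps_zpow_mul_neg (ν i)
  rw [h, Matrix.diagonal_one]

lemma v_mem (hσ : IsFrobenius K q σ) (hq : q ≠ 0) {n : ℕ} {ν : Fin n → ℤ}
    (hν : StrictDominant ν) {m N : ℤ}
    {u : Matrix (Fin n) (Fin n) (LaurentSeries K)} (hu : BddU (fun d => d * N + m) u) :
    BddU (fun d => d * N + m) (epsDiag K ν * u.map σ * epsDiag K (fun i => -ν i)) := by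
  have hentry : ∀ p q : Fin n,
      (epsDiag K ν * u.map σ * epsDiag K (fun i => -ν i)) p q =
        eps K ^ (ν p) * σ (u p q) * eps K ^ (-(ν q)) := by
    intro p q
    rw [epsDiag, epsDiag, Matrix.mul_diagonal, Matrix.diagonal_mul, Matrix.map_apply]
  refine ⟨⟨fun p => ?_, fun i j hji => ?_⟩, fun p q hpq => ?_⟩
  · rw [hentry, hu.1.1, sigma_one hσ hq, mul_one, eps_zpow_mul_neg]
  · rw [hentry, hu.1.2 i j hji, sigma_zero hσ hq, mul_zero, zero_mul]
  · rw [hentry]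
    have h1 : ((((q : ℤ) - (p : ℤ)) * N + m : ℤ) : WithTop ℤ) ≤ val (σ (u p q)) :=
      le_trans (hu.2 p q hpq) (val_sigma_ge hσ hq _)
    have hd := hν p q hpq
    refine coe_add_le ?_ (coe_add_le (le_refl _) (le_of_eq (val_eps_zpow (ν p)).symm) h1)
      (le_of_eq (val_eps_zpow (-(ν q))).symm)
    have hgoal : ((q : ℤ) - (p : ℤ)) * N + m ≤ ν p + (((q : ℤ) - (p : ℤ)) * N + m) + -ν q := by
      linarith
    exact hgoal

end Aux

/-- let `ν` be strictly dominant and `T ⊆ U_N` with `T·U_{m,N} ⊆ T`.  Then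
`f_ν⁻¹(T) ∩ U_N` is stable under right multiplication by `U_{m,N}`, and for `g ∈ U_N` the
coset `f_ν(g)·U_{m,N}` meets `T` iff `f_ν(g) ∈ T`; hence in `U_N/U_{m,N}` the preimage of
`T/U_{m,N}` under the map induced by `f_ν` equals `f_ν⁻¹(T)/U_{m,N}`. -/
theorem fnu_preimage_mod_UmN (F : Type*) [Field F] [Fintype F]
    (n : ℕ) (hn : 2 ≤ n)
    (σ : LaurentSeries (AlgebraicClosure F) → LaurentSeries (AlgebraicClosure F))
    (hσ : IsFrobenius (AlgebraicClosure F) (Fintype.card F) σ)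
    (ν : Fin n → ℤ) (hν : StrictDominant ν) (N m : ℤ) (hm : 0 < m)
    (T : Set (Matrix (Fin n) (Fin n) (LaurentSeries (AlgebraicClosure F))))
    (hTU : T ⊆ UN (AlgebraicClosure F) n N)
    (hT : ∀ g ∈ T, ∀ u ∈ UmN (AlgebraicClosure F) n m N, g * u ∈ T) :
    (∀ g ∈ UN (AlgebraicClosure F) n N, fnu σ ν g ∈ T →
      ∀ u ∈ UmN (AlgebraicClosure F) n m N, fnu σ ν (g * u) ∈ T) ∧
    (∀ g ∈ UN (AlgebraicClosure F) n N,
      ((∃ u ∈ UmN (AlgebraicClosure F) n m N, fnu σ ν g * u ∈ T) ↔ fnu σ ν g ∈ T)) := by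
  open Aux in
  set K := AlgebraicClosure F
  have hq : Fintype.card F ≠ 0 := Fintype.card_ne_zero
  obtain ⟨f, hf⟩ := exists_frobenius_hom F
  have hbN : ∀ d₁ d₂ : ℤ, 1 ≤ d₁ → 1 ≤ d₂ →
      (fun d => d * N) (d₁ + d₂) ≤ (fun d => d * N) d₁ + (fun d => d * N) d₂ :=
    fun d₁ d₂ _ _ => le_of_eq (by ring)
  have hbNm : ∀ d₁ d₂ : ℤ, 1 ≤ d₁ → 1 ≤ d₂ →
      (fun d => d * N + m) (d₁ + d₂) ≤ (fun d => d * N + m) d₁ + (fun d => d * N + m) d₂ := by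
    intro d₁ d₂ _ _
    simp only []
    have : (d₁ + d₂) * N = d₁ * N + d₂ * N := by ring
    linarith
  constructor
  · -- part 1
    intro g hg hgT u hu
    obtain ⟨huinv, huu, huu'⟩ := bddU_inv hbNm (mem_UmN.mp hu)
    have hh : BddU (fun d => d * N) (fnu σ ν g) := mem_UN.mp (hTU hgT)
    obtain ⟨hhinv, hhh, hhh'⟩ := bddU_inv hbN hh
    set h : Matrix (Fin n) (Fin n) (LaurentSeries K) := fnu σ ν g with hhdef
    set v : Matrix (Fin n) (Fin n) (LaurentSeries K) :=
      epsDiag K ν * u.map σ * epsDiag K (fun i => -ν i) with hvdef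
    -- key identity
    have key : fnu σ ν (g * u) = u⁻¹ * h * v := by
      rw [hhdef, hvdef]
      show (g * u)⁻¹ * epsDiag K ν * ((g * u).map σ) * epsDiag K (fun i => -ν i) = _
      rw [Matrix.mul_inv_rev, sigma_map_matrix_mul hσ hq f hf]
      show _ = u⁻¹ * (g⁻¹ * epsDiag K ν * g.map σ * epsDiag K (fun i => -ν i)) *
        (epsDiag K ν * u.map σ * epsDiag K (fun i => -ν i))
      simp only [Matrix.mul_assoc]
      rw [show epsDiag K (fun i => -ν i) * (epsDiag K ν * (u.map σ *
          epsDiag K (fun i => -ν i))) = u.map σ * epsDiag K (fun i => -ν i) by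
        rw [← Matrix.mul_assoc, epsDiag_neg_mul, Matrix.one_mul]]
    -- the conjugate of u⁻¹ by h lies in U_{m,N}
    set W : Matrix (Fin n) (Fin n) (LaurentSeries K) := u⁻¹ - 1 with hWdef
    have hW0 : ∀ p q : Fin n, ¬ p < q → W p q = 0 := by
      intro p q hpq
      rcases eq_or_lt_of_le (le_of_not_gt hpq) with heq | hlt
      · cases heq
        rw [hWdef, Matrix.sub_apply, Matrix.one_apply_eq, huinv.1.1, sub_self]
      · rw [hWdef, Matrix.sub_apply, Matrix.one_apply_ne (ne_of_lt hlt).symm,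
          huinv.1.2 p q hlt, sub_zero]
    have hWb : ∀ p q : Fin n, p < q →
        ((((q : ℤ) - (p : ℤ)) * N + m : ℤ) : WithTop ℤ) ≤ val (W p q) := by
      intro p q hpq
      have : W p q = u⁻¹ p q := by
        rw [hWdef, Matrix.sub_apply, Matrix.one_apply_ne (ne_of_lt hpq), sub_zero]
      rw [this]
      exact huinv.2 p q hpq
    have hconj : BddU (fun d => d * N + m) (1 + h⁻¹ * W * h) :=
      triple_entries hhinv hh hW0 hWb
    have hconj_eq : h⁻¹ * u⁻¹ * h = 1 + h⁻¹ * W * h := by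
      have hu1 : u⁻¹ = 1 + W := by rw [hWdef]; abel
      calc h⁻¹ * u⁻¹ * h = h⁻¹ * (1 + W) * h := by rw [← hu1]
        _ = h⁻¹ * h + h⁻¹ * W * h := by
            rw [Matrix.mul_add, Matrix.mul_one, Matrix.add_mul]
        _ = 1 + h⁻¹ * W * h := by rw [hhh']
    have hv : BddU (fun d => d * N + m) v := v_mem hσ hq hν (mem_UmN.mp hu)
    have hprod : BddU (fun d => d * N + m) ((h⁻¹ * u⁻¹ * h) * v) := by
      rw [hconj_eq]
      exact bddU_mul hbNm hconj hv
    have e2 : fnu σ ν (g * u) = h * ((h⁻¹ * u⁻¹ * h) * v) := by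
      rw [key]
      simp only [Matrix.mul_assoc]
      rw [← Matrix.mul_assoc h h⁻¹, hhh, Matrix.one_mul]
    rw [e2]
    exact hT _ hgT _ (mem_UmN.mpr hprod)
  · -- part 2
    intro g hg
    constructor
    · rintro ⟨u, hu, hTu⟩
      obtain ⟨huinv, huu, huu'⟩ := bddU_inv hbNm (mem_UmN.mp hu)
      have : fnu σ ν g = (fnu σ ν g * u) * u⁻¹ := by
        rw [Matrix.mul_assoc, huu, Matrix.mul_one]
      rw [this]
      exact hT _ hTu _ (mem_UmN.mpr huinv)
    · intro hgT
      exact ⟨1, mem_UmN.mpr one_mem_bddU, by rwa [Matrix.mul_one]⟩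
end
end

section
/- Let d ≤ e < f be integers with d + e + f = 0, and assume k ≤ e. Suppose val(β) = d, k > d, j + k > d + e, val(α·ε^k) = d + e, and val(α·γ − β·ε^j) > d + e. Then val(b) ≤ val(a) if and only if e ≥ i, and when e ≥ i one has val(b) = d + 2i. -/
noncomputable section

section Helpers

variable {K : Type*} [Field K]

lemma val_mul (x y : LaurentSeries K) : val (x * y) = val x + val y := by
  rcases eq_or_ne x 0 with rfl | hx
  · simp [val]
  rcases eq_or_ne y 0 with rfl | hy
  · simp [val]
  rw [val, val, val, ← HahnSeries.order_eq_orderTop_of_ne_zero hx,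
    ← HahnSeries.order_eq_orderTop_of_ne_zero hy,
    ← HahnSeries.order_eq_orderTop_of_ne_zero (mul_ne_zero hx hy),
    HahnSeries.order_mul hx hy, WithTop.coe_add]

lemma val_eps_zpow (n : ℤ) : val (eps K ^ n) = (n : WithTop ℤ) := by
  rw [eps, ← RatFunc.single_zpow, val, HahnSeries.orderTop_single one_ne_zero]

lemma val_neg (x : LaurentSeries K) : val (-x) = val x := HahnSeries.orderTop_neg

lemma val_sub_left {x y : LaurentSeries K} (h : val x < val y) : val (x - y) = val x :=
  HahnSeries.orderTop_sub h

lemma val_add_left {x y : LaurentSeries K} (h : val x < val y) : val (x + y) = val x :=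
  HahnSeries.orderTop_add_eq_left h

lemma min_le_val_add (x y : LaurentSeries K) : min (val x) (val y) ≤ val (x + y) :=
  HahnSeries.min_orderTop_le_orderTop_add

lemma val_eq_top_iff {x : LaurentSeries K} : val x = ⊤ ↔ x = 0 :=
  HahnSeries.orderTop_eq_top

lemma val_le_val_of {x y : LaurentSeries K} (h : ∀ n, y.coeff n ≠ 0 → x.coeff n ≠ 0) :
    val x ≤ val y := by
  rcases eq_or_ne y 0 with rfl | hy
  · simp [val]
  · have hyt : val y ≠ ⊤ := fun ht => hy (val_eq_top_iff.mp ht)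
    obtain ⟨g, hg⟩ := WithTop.ne_top_iff_exists.mp hyt
    rw [← hg]
    exact HahnSeries.orderTop_le_of_coeff_ne_zero (h g (HahnSeries.coeff_orderTop_ne hg.symm))

lemma val_sigma {q : ℕ} (hq : q ≠ 0) {σ : LaurentSeries K → LaurentSeries K}
    (hσ : IsFrobenius K q σ) (x : LaurentSeries K) : val (σ x) = val x := by
  refine le_antisymm (val_le_val_of fun n hn => ?_) (val_le_val_of fun n hn => ?_)
  · rw [hσ x n]
    exact pow_ne_zero _ hn
  · rw [hσ x n] at hn
    intro h0
    exact hn (by rw [h0, zero_pow hq])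

lemma sigma_zero_iff {q : ℕ} (hq : q ≠ 0) {σ : LaurentSeries K → LaurentSeries K}
    (hσ : IsFrobenius K q σ) (x : LaurentSeries K) : σ x = 0 ↔ x = 0 := by
  rw [← val_eq_top_iff, ← val_eq_top_iff, val_sigma hq hσ]

end Helpers

/-- the case `k ≤ e` for `x = ε^{(d,e,f)}s_2s_1`, `d ≤ e < f`: under the
stated valuation conditions, `val(b) ≤ val(a)` iff `e ≥ i`, and when `e ≥ i` one has
`val(b) = d + 2i`. -/
theorem case_d_min_k_le_e_val_b (F : Type*) [Field F] [Fintype F]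
    (σ : LaurentSeries (AlgebraicClosure F) → LaurentSeries (AlgebraicClosure F))
    (hσ : IsFrobenius (AlgebraicClosure F) (Fintype.card F) σ)
    (a b c : LaurentSeries (AlgebraicClosure F))
    (i j k : ℤ) (hij : j < i) (hjk : k < j) (hijk : i + j + k = 0)
    (d e f : ℤ) (hde : d ≤ e) (hef : e < f) (hdef : d + e + f = 0)
    (hke : k ≤ e)
    (α β γ : LaurentSeries (AlgebraicClosure F))
    (hα : α = eps (AlgebraicClosure F) ^ i * σ a - eps (AlgebraicClosure F) ^ j * a)
    (hβ : β = eps (AlgebraicClosure F) ^ i * σ b - eps (AlgebraicClosure F) ^ k * b -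
      a * (eps (AlgebraicClosure F) ^ j * σ c - eps (AlgebraicClosure F) ^ k * c))
    (hγ : γ = eps (AlgebraicClosure F) ^ j * σ c - eps (AlgebraicClosure F) ^ k * c)
    (hvβ : val β = (d : WithTop ℤ))
    (hkd : d < k)
    (hjkde : d + e < j + k)
    (hvα : val (α * eps (AlgebraicClosure F) ^ k) = ((d + e : ℤ) : WithTop ℤ))
    (hminor : ((d + e : ℤ) : WithTop ℤ) < val (α * γ - β * eps (AlgebraicClosure F) ^ j)) :
    (val b ≤ val a ↔ i ≤ e) ∧
    (i ≤ e → val b = ((d + 2 * i : ℤ) : WithTop ℤ)) := by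
  set K := AlgebraicClosure F
  set E := eps K with hE
  have hq : Fintype.card F ≠ 0 := Fintype.card_ne_zero
  have hvσ : ∀ x : LaurentSeries K, val (σ x) = val x := val_sigma hq hσ
  have hσ0 : ∀ x : LaurentSeries K, σ x = 0 ↔ x = 0 := sigma_zero_iff hq hσ
  -- a ≠ 0
  have ha : a ≠ 0 := by
    intro h
    have hα0 : α = 0 := by
      rw [hα, (hσ0 a).mpr h, h]; ring
    rw [hα0, zero_mul] at hvα
    simp [val] at hvα
    norm_cast at hvα
  obtain ⟨va, hva⟩ : ∃ va : ℤ, val a = (va : WithTop ℤ) :=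
    ⟨a.order, (HahnSeries.order_eq_orderTop_of_ne_zero ha).symm⟩
  have hvσa : val (σ a) = (va : WithTop ℤ) := by rw [hvσ, hva]
  -- val α = j + va
  have hvja : val (E ^ j * a) = ((j + va : ℤ) : WithTop ℤ) := by
    rw [val_mul, val_eps_zpow, hva, ← WithTop.coe_add]
  have hvia : val (E ^ i * σ a) = ((i + va : ℤ) : WithTop ℤ) := by
    rw [val_mul, val_eps_zpow, hvσa, ← WithTop.coe_add]
  have hvαval : val α = ((j + va : ℤ) : WithTop ℤ) := by
    have hlt : val (E ^ j * a) < val (E ^ i * σ a) := by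
      rw [hvja, hvia, WithTop.coe_lt_coe]; omega
    have hneg : α = -(E ^ j * a - E ^ i * σ a) := by rw [hα]; ring
    rw [hneg, val_neg, val_sub_left hlt, hvja]
  -- va = d + e + i
  have hva_eq : va = d + e + i := by
    have h1 : val (α * E ^ k) = ((j + va + k : ℤ) : WithTop ℤ) := by
      rw [val_mul, hvαval, val_eps_zpow, ← WithTop.coe_add]
    rw [h1] at hvα
    rw [WithTop.coe_inj] at hvα
    omega
  -- key algebraic identity
  set B := E ^ i * σ b - E ^ k * b with hB
  have key : α * B = β * (E ^ i * σ a) + a * (α * γ - β * E ^ j) := by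
    have h2 := hβ
    rw [← hγ] at h2
    rw [hB, h2, hα]; ring
  -- valuation of the two summands
  have hvaδ : ((2 * d + 2 * e + i : ℤ) : WithTop ℤ) < val (a * (α * γ - β * E ^ j)) := by
    rw [val_mul, hva]
    have : ((2 * d + 2 * e + i : ℤ) : WithTop ℤ) = (va : WithTop ℤ) + ((d + e : ℤ) : WithTop ℤ) := by
      rw [← WithTop.coe_add, WithTop.coe_inj]; omega
    rw [this]
    exact WithTop.add_lt_add_left (WithTop.coe_ne_top) hminor
  have hvβterm : val (β * (E ^ i * σ a)) = ((2 * d + e + 2 * i : ℤ) : WithTop ℤ) := by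
    rw [val_mul, hvβ, hvia, ← WithTop.coe_add, WithTop.coe_inj]
    omega
  -- claim A : i ≤ e → val b = d + 2 i
  have claimA : i ≤ e → val b = ((d + 2 * i : ℤ) : WithTop ℤ) := by
    intro hie
    have h1 : val (β * (E ^ i * σ a)) < val (a * (α * γ - β * E ^ j)) := by
      rw [hvβterm]
      refine lt_of_le_of_lt ?_ hvaδ
      rw [WithTop.coe_le_coe]; omega
    have h2 : val (α * B) = ((2 * d + e + 2 * i : ℤ) : WithTop ℤ) := by
      rw [key, val_add_left h1, hvβterm]
    have hb : b ≠ 0 := by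
      intro h
      have hB0 : B = 0 := by rw [hB, (hσ0 b).mpr h, h]; ring
      rw [hB0, mul_zero] at h2
      simp [val] at h2
      norm_cast at h2
    obtain ⟨vb, hvb⟩ : ∃ vb : ℤ, val b = (vb : WithTop ℤ) :=
      ⟨b.order, (HahnSeries.order_eq_orderTop_of_ne_zero hb).symm⟩
    have hvσb : val (σ b) = (vb : WithTop ℤ) := by rw [hvσ, hvb]
    have hvkb : val (E ^ k * b) = ((k + vb : ℤ) : WithTop ℤ) := by
      rw [val_mul, val_eps_zpow, hvb, ← WithTop.coe_add]
    have hvib : val (E ^ i * σ b) = ((i + vb : ℤ) : WithTop ℤ) := by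
      rw [val_mul, val_eps_zpow, hvσb, ← WithTop.coe_add]
    have hvBval : val B = ((k + vb : ℤ) : WithTop ℤ) := by
      have hlt : val (E ^ k * b) < val (E ^ i * σ b) := by
        rw [hvkb, hvib, WithTop.coe_lt_coe]; omega
      have hneg : B = -(E ^ k * b - E ^ i * σ b) := by rw [hB]; ring
      rw [hneg, val_neg, val_sub_left hlt, hvkb]
    have h3 : ((j + va + (k + vb) : ℤ) : WithTop ℤ) = ((2 * d + e + 2 * i : ℤ) : WithTop ℤ) := by
      rw [← h2, val_mul, hvαval, hvBval, ← WithTop.coe_add]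
    rw [WithTop.coe_inj] at h3
    rw [hvb, WithTop.coe_inj]
    omega
  refine ⟨⟨fun hba => ?_, fun hie => ?_⟩, claimA⟩
  · -- val b ≤ val a → i ≤ e
    by_contra hei
    push_neg at hei
    have h1 : ((2 * d + 2 * e + i : ℤ) : WithTop ℤ) < val (β * (E ^ i * σ a)) := by
      rw [hvβterm, WithTop.coe_lt_coe]; omega
    have h2 : ((2 * d + 2 * e + i : ℤ) : WithTop ℤ) < val (α * B) := by
      rw [key]
      exact lt_of_lt_of_le (lt_min h1 hvaδ) (min_le_val_add _ _)
    have hb : b ≠ 0 := by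
      intro h
      rw [hva, h] at hba
      rw [val_eq_top_iff.mpr rfl] at hba
      exact WithTop.coe_ne_top (top_le_iff.mp hba)
    obtain ⟨vb, hvb⟩ : ∃ vb : ℤ, val b = (vb : WithTop ℤ) :=
      ⟨b.order, (HahnSeries.order_eq_orderTop_of_ne_zero hb).symm⟩
    have hvσb : val (σ b) = (vb : WithTop ℤ) := by rw [hvσ, hvb]
    have hvkb : val (E ^ k * b) = ((k + vb : ℤ) : WithTop ℤ) := by
      rw [val_mul, val_eps_zpow, hvb, ← WithTop.coe_add]
    have hvib : val (E ^ i * σ b) = ((i + vb : ℤ) : WithTop ℤ) := by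
      rw [val_mul, val_eps_zpow, hvσb, ← WithTop.coe_add]
    have hvBval : val B = ((k + vb : ℤ) : WithTop ℤ) := by
      have hlt : val (E ^ k * b) < val (E ^ i * σ b) := by
        rw [hvkb, hvib, WithTop.coe_lt_coe]; omega
      have hneg : B = -(E ^ k * b - E ^ i * σ b) := by rw [hB]; ring
      rw [hneg, val_neg, val_sub_left hlt, hvkb]
    rw [val_mul, hvαval, hvBval, ← WithTop.coe_add, WithTop.coe_lt_coe] at h2
    rw [hvb, hva, WithTop.coe_le_coe] at hba
    omega
  · rw [claimA hie, hva, WithTop.coe_le_coe]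
    omega
end
end
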